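/- Vector soft-thresholding: for w ∈ ℝⁿ and r > 0, the unique minimizer of p ↦ ‖p‖₂ + (r/2)‖p - w‖₂² is p* = (1 - 1/(r‖w‖₂))·w when ‖w‖₂ > 1/r, and p* = 0 when ‖w‖₂ ≤ 1/r. -/

import Mathlib

/-- Vector soft-thresholding: the unique minimizer of `p ↦ ‖p‖ + (r/2)‖p - w‖²`. -/
theorem soft_thresholding_vector (n : ℕ) (w : EuclideanSpace ℝ (Fin n)) (r : ℝ) (hr : 0 < r) :
    let pstar : EuclideanSpace ℝ (Fin n) :=
      if ‖w‖ > 1 / r then (1 - 1 / (r * ‖w‖)) • w else 0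
    (∀ p : EuclideanSpace ℝ (Fin n),
        ‖pstar‖ + r / 2 * ‖pstar - w‖ ^ 2 ≤ ‖p‖ + r / 2 * ‖p - w‖ ^ 2) ∧
    (∀ p : EuclideanSpace ℝ (Fin n),
        (∀ q : EuclideanSpace ℝ (Fin n),
          ‖p‖ + r / 2 * ‖p - w‖ ^ 2 ≤ ‖q‖ + r / 2 * ‖q - w‖ ^ 2) → p = pstar) := by
  intro pstar
  have key : ∀ p : EuclideanSpace ℝ (Fin n),
      ‖pstar‖ + r / 2 * ‖pstar - w‖ ^ 2 + r / 2 * ‖p - pstar‖ ^ 2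
        ≤ ‖p‖ + r / 2 * ‖p - w‖ ^ 2 := by
    intro p
    have hcs : inner ℝ p w ≤ ‖p‖ * ‖w‖ := real_inner_le_norm p w
    have hp0 : (0:ℝ) ≤ ‖p‖ := norm_nonneg _
    have hw0 : (0:ℝ) ≤ ‖w‖ := norm_nonneg _
    have hpw : ‖p - w‖ ^ 2 = ‖p‖ ^ 2 - 2 * inner ℝ p w + ‖w‖ ^ 2 := by
      rw [@norm_sub_sq_real]
    by_cases hgt : ‖w‖ > 1 / r
    · have hrb : 1 < r * ‖w‖ := by
        rw [gt_iff_lt, div_lt_iff₀ hr] at hgt; linarith [hgt]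
      have hrb0 : 0 < r * ‖w‖ := by linarith
      set d : ℝ := 1 / (r * ‖w‖) with hd
      have hd1 : d * (r * ‖w‖) = 1 := by
        rw [hd]; exact one_div_mul_cancel hrb0.ne'
      have hd0 : 0 < d := by positivity
      have hdlt : d < 1 := by
        rw [hd, div_lt_one hrb0]; exact hrb
      have hps : pstar = (1 - d) • w := by
        simp only [pstar, if_pos hgt, hd]
      rw [hps]
      have h1 : ‖(1 - d) • w‖ = (1 - d) * ‖w‖ := by
        rw [norm_smul, Real.norm_eq_abs, abs_of_pos (by linarith)]
      have h2 : (1 - d) • w - w = (-d) • w := by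
        rw [sub_smul, one_smul, neg_smul]; abel
      have h3 : ‖(1 - d) • w - w‖ = d * ‖w‖ := by
        rw [h2, norm_smul, Real.norm_eq_abs, abs_neg, abs_of_pos hd0]
      have h4 : ‖p - (1 - d) • w‖ ^ 2
          = ‖p‖ ^ 2 - 2 * ((1 - d) * inner ℝ p w) + ((1 - d) * ‖w‖) ^ 2 := by
        rw [@norm_sub_sq_real, real_inner_smul_right, h1]
      rw [h1, h3, h4, hpw]
      have hb0 : (0:ℝ) < ‖w‖ := lt_trans (by positivity) hgt
      have e1 : r * d * (‖p‖ * ‖w‖) = ‖p‖ := by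
        rw [hd]; field_simp
      have e2 : r * ‖w‖ ^ 2 * (d * (d - 1)) = ‖w‖ * (d - 1) := by
        rw [hd]; field_simp
      nlinarith [mul_le_mul_of_nonneg_left hcs (mul_nonneg hr.le hd0.le), e1, e2]
    · have hps : pstar = 0 := by simp only [pstar, if_neg hgt]
      have hrb : r * ‖w‖ ≤ 1 := by
        push_neg at hgt
        calc r * ‖w‖ ≤ r * (1 / r) := by
              exact mul_le_mul_of_nonneg_left hgt hr.le
          _ = 1 := by field_simp
      rw [hps]
      simp only [norm_zero, zero_sub, norm_neg, sub_zero]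
      rw [hpw]
      nlinarith [mul_le_mul_of_nonneg_left hcs hr.le]
  constructor
  · intro p
    have := key p
    nlinarith [sq_nonneg ‖p - pstar‖, hr.le]
  · intro p hp
    have h1 := key p
    have h2 := hp pstar
    have h3 : r / 2 * ‖p - pstar‖ ^ 2 ≤ 0 := by linarith
    have h4 : ‖p - pstar‖ ^ 2 ≤ 0 := by nlinarith
    have h5 : ‖p - pstar‖ = 0 := by nlinarith [sq_nonneg ‖p - pstar‖, norm_nonneg (p - pstar)]
    have := norm_eq_zero.mp h5
    exact sub_eq_zero.mp this
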